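/- Let D be a square block matrix over a commutative ring R, with δ×δ blocks D_{ij} that are m×m matrices pairwise commuting with each other. Then det(D) (as an mδ×mδ matrix) equals the determinant of the m×m matrix obtained by formally computing the δ×δ determinant of the blocks: det(D) = det(Det_block(D)), where Det_block(D) = Σ_σ sgn(σ) Π_i D_{i,σ(i)}. -/

import Mathlib

open Matrix Polynomial

namespace Stmt7Aux



variable {m : ℕ} {R : Type*} [CommRing R]

/-- assembled block matrix -/
def asm {δ : ℕ} (B : Fin δ → Fin δ → Matrix (Fin m) (Fin m) R) :
    Matrix (Fin δ × Fin m) (Fin δ × Fin m) R :=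
  Matrix.of fun p q => B p.1 q.1 p.2 q.2

/-- formal block determinant -/
def bdet {δ : ℕ} (B : Fin δ → Fin δ → Matrix (Fin m) (Fin m) R) :
    Matrix (Fin m) (Fin m) R :=
  ∑ σ : Equiv.Perm (Fin δ), (Equiv.Perm.sign σ : ℤ) • (List.ofFn fun i => B i (σ i)).prod

/-- commutative bicommutant -/
def CommSub (s : Set (Matrix (Fin m) (Fin m) R)) : Subring (Matrix (Fin m) (Fin m) R) :=
  Subring.centralizer (Set.centralizer s)

lemma mem_commSub_iff {s : Set (Matrix (Fin m) (Fin m) R)} {x} :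
    x ∈ CommSub s ↔ ∀ g ∈ Set.centralizer s, g * x = x * g :=
  Subring.mem_centralizer_iff

lemma self_mem_commSub {s : Set (Matrix (Fin m) (Fin m) R)} {x} (hx : x ∈ s) :
    x ∈ CommSub s := by
  rw [mem_commSub_iff]
  intro g hg
  exact (hg x hx).symm

lemma commSub_mul_comm {s : Set (Matrix (Fin m) (Fin m) R)}
    (hs : ∀ x ∈ s, ∀ y ∈ s, x * y = y * x) {x y}
    (hx : x ∈ CommSub s) (hy : y ∈ CommSub s) : x * y = y * x := by
  rw [mem_commSub_iff] at hx hy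
  have hy' : y ∈ Set.centralizer s := by
    intro a ha
    exact hy a (by intro b hb; exact (hs b hb a ha))
  exact (hx y hy').symm

lemma inv_mem_commSub {s : Set (Matrix (Fin m) (Fin m) R)} {u n}
    (hu : u ∈ CommSub s) (h1 : u * n = 1) (h2 : n * u = 1) : n ∈ CommSub s := by
  rw [mem_commSub_iff] at hu ⊢
  intro g hg
  have hgu : g * u = u * g := hu g hg
  calc g * n = n * u * (g * n) := by rw [h2, one_mul]
    _ = n * (u * g) * n := by noncomm_ring
    _ = n * (g * u) * n := by rw [hgu]
    _ = n * g * (u * n) := by noncomm_ring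
    _ = n * g := by rw [h1, mul_one]

/-- the commutative ring structure on CommSub -/
def commSubCommRing {s : Set (Matrix (Fin m) (Fin m) R)}
    (hs : ∀ x ∈ s, ∀ y ∈ s, x * y = y * x) : CommRing (CommSub s) :=
  { (inferInstance : Ring (CommSub s)) with
    mul_comm := fun x y => Subtype.ext (commSub_mul_comm hs x.2 y.2) }

/-- bdet of blocks in the image of a ring hom from a commutative ring is the image of det -/
lemma bdet_hom_det {δ : ℕ} {S : Type*} [CommRing S] (f : S →+* Matrix (Fin m) (Fin m) R)
    (A : Matrix (Fin δ) (Fin δ) S) :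
    bdet (fun i j => f (A i j)) = f A.det := by
  rw [← Matrix.det_transpose, Matrix.det_apply, map_sum]
  unfold bdet
  refine Finset.sum_congr rfl fun σ _ => ?_
  rw [Units.smul_def, map_zsmul]
  congr 1
  have h1 : (∏ i, Aᵀ (σ i) i) = (List.ofFn fun i => A i (σ i)).prod := by
    rw [List.prod_ofFn]
    exact Finset.prod_congr rfl fun i _ => rfl
  rw [h1, map_list_prod, List.map_ofFn]
  rfl




/-- index equivalence for splitting off the first row/column -/
def eS (δ : ℕ) : Fin (δ + 1) ≃ Unit ⊕ Fin δ where
  toFun i := Fin.cases (Sum.inl ()) (fun j => Sum.inr j) i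
  invFun q := Sum.elim (fun _ => 0) (fun j => j.succ) q
  left_inv i := by induction i using Fin.cases <;> simp
  right_inv q := by rcases q with _ | j <;> simp

/-- Schur complement determinant formula over a commutative ring -/
lemma det_schur {S : Type*} [CommRing S] {δ : ℕ} (A : Matrix (Fin (δ+1)) (Fin (δ+1)) S)
    (n : S) (h1 : A 0 0 * n = 1) :
    A.det = A 0 0 *
      (Matrix.of fun i j : Fin δ => A i.succ j.succ - A i.succ 0 * n * A 0 j.succ).det := by
  have key : A = (Matrix.fromBlocks (Matrix.of fun _ _ : Unit => A 0 0)
      (Matrix.of fun (_ : Unit) (j : Fin δ) => A 0 j.succ)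
      (Matrix.of fun (i : Fin δ) (_ : Unit) => A i.succ 0)
      (Matrix.of fun i j : Fin δ => A i.succ j.succ)).submatrix (eS δ) (eS δ) := by
    ext i j
    induction i using Fin.cases <;> induction j using Fin.cases <;>
      simp [eS, Matrix.fromBlocks]
  letI : Invertible (Matrix.of fun _ _ : Unit => A 0 0) := by
    refine ⟨Matrix.of fun _ _ : Unit => n, ?_, ?_⟩ <;>
    · ext i j
      simp [Matrix.mul_apply, Matrix.one_apply, h1, mul_comm n (A 0 0)]
  have hdet := congrArg Matrix.det key
  rw [Matrix.det_submatrix_equiv_self, Matrix.det_fromBlocks₁₁] at hdet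
  have hinv : (⅟ (Matrix.of fun _ _ : Unit => A 0 0)) = Matrix.of fun _ _ : Unit => n := rfl
  rw [hdet]
  congr 1
  · simp [Matrix.det_unique]
  · congr 1
    ext i j
    simp [hinv, Matrix.mul_apply]




variable {m : ℕ} {R : Type*} [CommRing R]


/-- index equivalence for splitting off the first block row/column -/
def eB (δ m : ℕ) : Fin (δ + 1) × Fin m ≃ Fin m ⊕ (Fin δ × Fin m) where
  toFun p := Fin.cases (Sum.inl p.2) (fun i => Sum.inr (i, p.2)) p.1
  invFun q := Sum.elim (fun k => (0, k)) (fun q => (q.1.succ, q.2)) q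
  left_inv p := by
    obtain ⟨i, k⟩ := p
    induction i using Fin.cases <;> simp
  right_inv q := by rcases q with k | ⟨i, k⟩ <;> simp

lemma asm_det_succ {δ : ℕ} (B : Fin (δ+1) → Fin (δ+1) → Matrix (Fin m) (Fin m) R)
    (N : Matrix (Fin m) (Fin m) R) (hN : B 0 0 * N = 1) (hN' : N * B 0 0 = 1) :
    (asm B).det = (B 0 0).det *
      (asm fun i j : Fin δ => B i.succ j.succ - B i.succ 0 * N * B 0 j.succ).det := by
  have key : asm B = (Matrix.fromBlocks (B 0 0)
      (Matrix.of fun (k : Fin m) (q : Fin δ × Fin m) => B 0 q.1.succ k q.2)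
      (Matrix.of fun (p : Fin δ × Fin m) (k : Fin m) => B p.1.succ 0 p.2 k)
      (Matrix.of fun p q : Fin δ × Fin m => B p.1.succ q.1.succ p.2 q.2)).submatrix
        (eB δ m) (eB δ m) := by
    ext ⟨i, k⟩ ⟨j, l⟩
    induction i using Fin.cases <;> induction j using Fin.cases <;>
      simp [eB, asm, Matrix.fromBlocks]
  letI : Invertible (B 0 0) := ⟨N, hN', hN⟩
  have hdet := congrArg Matrix.det key
  rw [Matrix.det_submatrix_equiv_self, Matrix.det_fromBlocks₁₁] at hdet
  have hinv : (⅟ (B 0 0)) = N := rfl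
  rw [hdet]
  congr 1


/-- the invertible-pivot induction step -/
lemma step {δ : ℕ} (B : Fin (δ+1) → Fin (δ+1) → Matrix (Fin m) (Fin m) R)
    (hcomm : ∀ i j k l, Commute (B i j) (B k l))
    (N : Matrix (Fin m) (Fin m) R) (hN : B 0 0 * N = 1) (hN' : N * B 0 0 = 1)
    (IH : ∀ C : Fin δ → Fin δ → Matrix (Fin m) (Fin m) R,
      (∀ i j k l, Commute (C i j) (C k l)) → (asm C).det = (bdet C).det) :
    (asm B).det = (bdet B).det := by
  classical
  set s : Set (Matrix (Fin m) (Fin m) R) := {x | ∃ i j, x = B i j} with hs_def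
  have hs : ∀ x ∈ s, ∀ y ∈ s, x * y = y * x := by
    rintro x ⟨i, j, rfl⟩ y ⟨k, l, rfl⟩
    exact hcomm i j k l
  have hBmem : ∀ i j, B i j ∈ CommSub s := fun i j => self_mem_commSub ⟨i, j, rfl⟩
  have hNmem : N ∈ CommSub s := inv_mem_commSub (hBmem 0 0) hN hN'
  letI : CommRing (CommSub s) := commSubCommRing hs
  set A : Matrix (Fin (δ+1)) (Fin (δ+1)) (CommSub s) :=
    Matrix.of fun i j => (⟨B i j, hBmem i j⟩ : CommSub s) with hA
  set n : CommSub s := ⟨N, hNmem⟩ with hn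
  have h1 : A 0 0 * n = 1 := Subtype.ext hN
  set C : Fin δ → Fin δ → Matrix (Fin m) (Fin m) R :=
    fun i j => B i.succ j.succ - B i.succ 0 * N * B 0 j.succ with hC
  have hCmem : ∀ i j, C i j ∈ CommSub s := fun i j =>
    sub_mem (hBmem _ _) (mul_mem (mul_mem (hBmem _ _) hNmem) (hBmem _ _))
  have hCcomm : ∀ i j k l, Commute (C i j) (C k l) := fun i j k l =>
    commSub_mul_comm hs (hCmem i j) (hCmem k l)
  -- block determinant factorization
  have hb1 : bdet B = (CommSub s).subtype A.det := by
    have := bdet_hom_det (CommSub s).subtype A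
    exact this
  have hb2 : bdet C = (CommSub s).subtype
      (Matrix.of fun i j : Fin δ => A i.succ j.succ - A i.succ 0 * n * A 0 j.succ).det := by
    have := bdet_hom_det (CommSub s).subtype
      (Matrix.of fun i j : Fin δ => A i.succ j.succ - A i.succ 0 * n * A 0 j.succ)
    exact this
  have hfact : bdet B = B 0 0 * bdet C := by
    rw [hb1, hb2, det_schur A n h1, _root_.map_mul]
    rfl
  rw [asm_det_succ B N hN hN', IH C hCcomm, hfact, Matrix.det_mul]

/-- naturality of bdet under entrywise ring homs -/
lemma bdet_map {δ : ℕ} {R' : Type*} [CommRing R'] (g : R →+* R')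
    (B : Fin δ → Fin δ → Matrix (Fin m) (Fin m) R) :
    bdet (fun i j => (B i j).map g) = (bdet B).map g := by
  have hmm : ∀ M : Matrix (Fin m) (Fin m) R, M.map g = g.mapMatrix M := fun _ => rfl
  unfold bdet
  rw [hmm, map_sum]
  refine Finset.sum_congr rfl fun σ _ => ?_
  rw [map_zsmul, map_list_prod, List.map_ofFn]
  rfl

lemma core (m : ℕ) : ∀ (δ : ℕ) {R : Type u} [CommRing R]
    (B : Fin δ → Fin δ → Matrix (Fin m) (Fin m) R),
    (∀ i j k l, Commute (B i j) (B k l)) → (asm B).det = (bdet B).det := by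
  intro δ
  induction δ with
  | zero =>
    intro R _ B _
    have h1 : (asm B).det = 1 := Matrix.det_isEmpty
    have h2 : bdet B = 1 := by
      unfold bdet
      simp [List.ofFn_zero]
    rw [h1, h2, Matrix.det_one]
  | succ δ IH =>
    intro R _ B hcomm
    classical
    set B₁ : Fin (δ+1) → Fin (δ+1) → Matrix (Fin m) (Fin m) (Polynomial R) :=
      fun i j => (B i j).map C + if i = 0 ∧ j = 0 then Matrix.diagonal (fun _ => X) else 0
      with hB₁
    have hdiag : ∀ M : Matrix (Fin m) (Fin m) (Polynomial R),
        Commute (Matrix.diagonal fun _ : Fin m => (X : Polynomial R)) M := by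
      intro M
      unfold Commute SemiconjBy
      ext i j
      simp [Matrix.diagonal_mul, Matrix.mul_diagonal, mul_comm]
    have hcomm₁ : ∀ i j k l, Commute (B₁ i j) (B₁ k l) := by
      intro i j k l
      apply Commute.add_left <;> apply Commute.add_right
      · exact (hcomm i j k l).map (C : R →+* Polynomial R).mapMatrix
      · split
        · exact (hdiag _).symm
        · exact Commute.zero_right _
      · split
        · exact hdiag _
        · exact Commute.zero_left _
      · split
        · exact hdiag _
        · exact Commute.zero_left _
    have hB00 : B₁ 0 0 = charmatrix (-(B 0 0)) := by
      ext i j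
      by_cases h : i = j
      · subst h
        simp [hB₁, charmatrix_apply_eq, Matrix.diagonal_apply_eq, sub_neg_eq_add, add_comm]
      · simp [hB₁, charmatrix_apply_ne _ _ _ h, Matrix.diagonal_apply_ne _ h]
    have hmonic : (B₁ 0 0).det.Monic := by
      rw [hB00]
      exact Matrix.charpoly_monic (-(B 0 0))
    set T := Localization.Away ((B₁ 0 0).det) with hT
    set ρ : Polynomial R →+* T := algebraMap (Polynomial R) T with hρ
    have hM : Submonoid.powers ((B₁ 0 0).det) ≤ nonZeroDivisors (Polynomial R) :=
      Submonoid.powers_le.mpr hmonic.mem_nonZeroDivisors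
    have hinj : Function.Injective ρ := IsLocalization.injective T hM
    set B₂ : Fin (δ+1) → Fin (δ+1) → Matrix (Fin m) (Fin m) T :=
      fun i j => (B₁ i j).map ρ with hB₂
    have hcomm₂ : ∀ i j k l, Commute (B₂ i j) (B₂ k l) := fun i j k l =>
      (hcomm₁ i j k l).map ρ.mapMatrix
    have hu : IsUnit (B₂ 0 0).det := by
      have hdd : (B₂ 0 0).det = ρ ((B₁ 0 0).det) := by
        rw [RingHom.map_det, RingHom.mapMatrix_apply]
      rw [hdd]
      exact IsLocalization.map_units (M := Submonoid.powers ((B₁ 0 0).det)) T ⟨_, Submonoid.mem_powers _⟩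
    obtain ⟨u, hu'⟩ := (Matrix.isUnit_iff_isUnit_det _).mpr hu
    set Nv : Matrix (Fin m) (Fin m) T := ↑u⁻¹ with hNv
    have hN : B₂ 0 0 * Nv = 1 := by rw [← hu', hNv]; exact u.mul_inv
    have hN' : Nv * B₂ 0 0 = 1 := by rw [← hu', hNv]; exact u.inv_mul
    have h₂ : (asm B₂).det = (bdet B₂).det :=
      step B₂ hcomm₂ Nv hN hN' (fun C hC => IH C hC)
    have hasm : asm B₂ = (asm B₁).map ρ := by
      ext ⟨i, k⟩ ⟨j, l⟩
      rfl
    have hbd : bdet B₂ = (bdet B₁).map ρ := bdet_map ρ B₁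
    have h₄ : (asm B₁).det = (bdet B₁).det := by
      apply hinj
      rw [RingHom.map_det, RingHom.map_det, RingHom.mapMatrix_apply,
        RingHom.mapMatrix_apply, ← hasm, ← hbd]
      exact h₂
    have hB₁0 : ∀ i j, (B₁ i j).map (evalRingHom (0 : R)) = B i j := by
      intro i j
      ext k l
      by_cases h : i = 0 ∧ j = 0
      · by_cases hkl : k = l
        · subst hkl
          simp [hB₁, h, Matrix.diagonal_apply_eq]
        · simp [hB₁, h, Matrix.diagonal_apply_ne _ hkl]
      · simp [hB₁, h]
    have h5 : asm B = (asm B₁).map (evalRingHom (0 : R)) := by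
      ext ⟨i, k⟩ ⟨j, l⟩
      show B i j k l = ((asm B₁).map (evalRingHom (0 : R))) (i, k) (j, l)
      rw [← hB₁0 i j]
      rfl
    have h6 : bdet B = (bdet B₁).map (evalRingHom (0 : R)) := by
      have harg : (fun i j => (B₁ i j).map (evalRingHom (0 : R))) = B :=
        funext fun i => funext fun j => hB₁0 i j
      rw [← harg]
      exact bdet_map (evalRingHom (0 : R)) B₁
    rw [h5, h6, ← RingHom.mapMatrix_apply, ← RingHom.mapMatrix_apply,
      ← RingHom.map_det, ← RingHom.map_det, h₄]

end Stmt7Aux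

/-- Silvester's theorem: the determinant of a block matrix with pairwise commuting
blocks equals the determinant of the formal block determinant. -/
theorem stmt7 {R : Type*} [CommRing R] {m δ : ℕ}
    (B : Fin δ → Fin δ → Matrix (Fin m) (Fin m) R)
    (hcomm : ∀ i j k l, Commute (B i j) (B k l)) :
    (Matrix.of fun (i : Fin δ × Fin m) (j : Fin δ × Fin m) => B i.1 j.1 i.2 j.2).det
      = (∑ σ : Equiv.Perm (Fin δ),
          (Equiv.Perm.sign σ : ℤ) • (List.ofFn fun i => B i (σ i)).prod).det := by
  exact Stmt7Aux.core m δ B hcomm
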